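/- Let f ∈ ℚ[x] with f(0) ≠ 0 have no multiple roots, and order its roots as α_1,…,α_s,γ_1,…,γ_t (n = s+t) where α_1,…,α_s are exactly the roots of f that are not roots of rational. If the Galois-like group G_f^B or the Galois-like group G_f^ℚ is doubly transitive as a permutation group on the roots, then every v ∈ R_f^ℚ (computed with respect to this ordering) satisfies v(1) = ⋯ = v(s) = (v(1)+⋯+v(n))/n. -/

import Mathlib

noncomputable section

open Polynomial

/-- `z` is a root of rational: some positive power of `z` is rational. -/
def IsRootOfRational (z : ℂ) : Prop := ∃ k : ℕ, 0 < k ∧ ∃ q : ℚ, z ^ k = (q : ℂ)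

/-- `z` is a rational number (viewed in `ℂ`). -/
def IsRat (z : ℂ) : Prop := ∃ q : ℚ, z = (q : ℂ)

/-- The Galois-like group `G_f`: permutations of the (indexed) roots preserving all
multiplicative relations. -/
def GaloisLike {ι : Type*} [Fintype ι] (r : ι → ℂ) : Set (Equiv.Perm ι) :=
  {σ | ∀ v : ι → ℤ, (∏ i, r i ^ v i) = 1 → (∏ i, r (σ i) ^ v i) = 1}

/-- The Galois-like group `G_f^B`. -/
def GaloisLikeB {ι : Type*} [Fintype ι] (r : ι → ℂ) : Set (Equiv.Perm ι) :=
  {σ | ∀ v : ι → ℤ, IsRat (∏ i, r i ^ v i) → (∏ i, r (σ i) ^ v i) = ∏ i, r i ^ v i}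

/-- The Galois-like group `G_f^ℚ`. -/
def GaloisLikeQ {ι : Type*} [Fintype ι] (r : ι → ℂ) : Set (Equiv.Perm ι) :=
  {σ | ∀ v : ι → ℤ, IsRat (∏ i, r i ^ v i) → IsRat (∏ i, r (σ i) ^ v i)}

/-- The exponent lattice of the vector `w` is trivial. -/
def VecLatticeTrivial {ι : Type*} [Fintype ι] (w : ι → ℂ) : Prop :=
  ∀ u : ι → ℤ, (∏ i, w i ^ u i) = 1 → ∀ i j : ι, u i = u j

/-- The lattice `R_w^ℚ` of the vector `w` is trivial. -/
def VecLatticeQTrivial {ι : Type*} [Fintype ι] (w : ι → ℂ) : Prop :=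
  ∀ u : ι → ℤ, IsRat (∏ i, w i ^ u i) → ∀ i j : ι, u i = u j

/-- A subset `M ⊆ ℚ[G/H]` is ℚ-admissible: there is `μ ∈ ℚ[G]` with stabilizer
(under left multiplication) exactly `H` such that `mμ = 0` for all `m ∈ M`
(here `Σ_{g∈G} m(ḡ) • gμ = |H| ⋅ (mμ)`, so we express `mμ = 0` this way). -/
def IsQAdmissible {G : Type*} [Group G] (H : Subgroup G) (M : Set ((G ⧸ H) →₀ ℚ)) : Prop :=
  ∃ μ : MonoidAlgebra ℚ G,
    (∀ g : G, MonoidAlgebra.single g (1 : ℚ) * μ = μ ↔ g ∈ H) ∧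
    ∀ m ∈ M, (∑ᶠ g : G, m (QuotientGroup.mk g) • (MonoidAlgebra.single g (1 : ℚ) * μ)) = 0

/-- A ℚ-subspace of `ℚ[G/H]` is a `ℚ[G]`-submodule iff it is stable under the
permutation action of `G` on `G/H`. -/
def IsGStable {G : Type*} [Group G] (H : Subgroup G) (M : Submodule ℚ ((G ⧸ H) →₀ ℚ)) : Prop :=
  ∀ g : G, ∀ m ∈ M, Finsupp.mapDomain (fun x : G ⧸ H => g • x) m ∈ M

/-- The pair `(G,H)` is ℚ-trivial: the only ℚ-admissible `ℚ[G]`-submodules of `ℚ[G/H]`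
are `0` and `V₁` (the line of constant coefficient vectors). -/
def QTrivialPair {G : Type*} [Group G] (H : Subgroup G) : Prop :=
  ∀ M : Submodule ℚ ((G ⧸ H) →₀ ℚ), IsGStable H M →
    IsQAdmissible H (M : Set ((G ⧸ H) →₀ ℚ)) →
    M = ⊥ ∨ (M : Set ((G ⧸ H) →₀ ℚ)) = {m | ∃ a : ℚ, ∀ x, m x = a}

/-- The action of `G` on `G/H` is transitive. -/
def PairTransitive {G : Type*} [Group G] (H : Subgroup G) : Prop :=
  ∀ x y : G ⧸ H, ∃ g : G, g • x = y

/-- The action of `G` on `G/H` is doubly transitive. -/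
def PairDoublyTransitive {G : Type*} [Group G] (H : Subgroup G) : Prop :=
  ∀ x₁ x₂ y₁ y₂ : G ⧸ H, x₁ ≠ x₂ → y₁ ≠ y₂ → ∃ g : G, g • x₁ = y₁ ∧ g • x₂ = y₂

/-- The action of `G` on `G/H` is doubly homogeneous. -/
def PairDoublyHomogeneous {G : Type*} [Group G] (H : Subgroup G) : Prop :=
  ∀ x₁ x₂ y₁ y₂ : G ⧸ H, x₁ ≠ x₂ → y₁ ≠ y₂ →
    ∃ g : G, ({g • x₁, g • x₂} : Set (G ⧸ H)) = {y₁, y₂}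

/-- A set of permutations of `ι` acts transitively. -/
def SetTransitive {ι : Type*} (S : Set (Equiv.Perm ι)) : Prop :=
  ∀ i j : ι, ∃ σ ∈ S, σ i = j

/-- A set of permutations of `ι` acts doubly transitively. -/
def SetDoublyTransitive {ι : Type*} (S : Set (Equiv.Perm ι)) : Prop :=
  ∀ i j k l : ι, i ≠ j → k ≠ l → ∃ σ ∈ S, σ i = k ∧ σ j = l

/-- A set of permutations of `ι` acts doubly homogeneously. -/
def SetDoublyHomogeneous {ι : Type*} (S : Set (Equiv.Perm ι)) : Prop :=
  ∀ i j k l : ι, i ≠ j → k ≠ l → ∃ σ ∈ S, ({σ i, σ j} : Set ι) = {k, l}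


section Helpers

variable {n : ℕ} {r : Fin n → ℂ}

lemma isRat_mul' {x y : ℂ} (hx : IsRat x) (hy : IsRat y) : IsRat (x * y) := by
  obtain ⟨q, rfl⟩ := hx; obtain ⟨p, rfl⟩ := hy; exact ⟨q * p, by push_cast; ring⟩

lemma isRat_inv' {x : ℂ} (hx : IsRat x) : IsRat x⁻¹ := by
  obtain ⟨q, rfl⟩ := hx; exact ⟨q⁻¹, by push_cast; ring⟩

lemma isRat_zpow' {x : ℂ} (c : ℤ) (hx : IsRat x) : IsRat (x ^ c) := by
  obtain ⟨q, rfl⟩ := hx; exact ⟨q ^ c, by push_cast; ring⟩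

lemma Rmem_add (hr : ∀ i, r i ≠ 0) {v w : Fin n → ℤ}
    (hv : IsRat (∏ i, r i ^ v i)) (hw : IsRat (∏ i, r i ^ w i)) :
    IsRat (∏ i, r i ^ (v i + w i)) := by
  have h : (∏ i, r i ^ (v i + w i)) = (∏ i, r i ^ v i) * ∏ i, r i ^ w i := by
    rw [← Finset.prod_mul_distrib]
    exact Finset.prod_congr rfl fun i _ => zpow_add₀ (hr i) _ _
  rw [h]; exact isRat_mul' hv hw

lemma Rmem_sub (hr : ∀ i, r i ≠ 0) {v w : Fin n → ℤ}
    (hv : IsRat (∏ i, r i ^ v i)) (hw : IsRat (∏ i, r i ^ w i)) :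
    IsRat (∏ i, r i ^ (v i - w i)) := by
  have h : (∏ i, r i ^ (v i - w i)) = (∏ i, r i ^ v i) * (∏ i, r i ^ w i)⁻¹ := by
    rw [← Finset.prod_inv_distrib, ← Finset.prod_mul_distrib]
    refine Finset.prod_congr rfl fun i _ => ?_
    rw [zpow_sub₀ (hr i), div_eq_mul_inv]
  rw [h]; exact isRat_mul' hv (isRat_inv' hw)

lemma Rmem_const (hone : IsRat (∏ i, r i)) (c : ℤ) : IsRat (∏ i, r i ^ c) := by
  rw [Finset.prod_zpow]; exact isRat_zpow' c hone

lemma Rmem_mulconst (c : ℤ) {v : Fin n → ℤ} (hv : IsRat (∏ i, r i ^ v i)) :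
    IsRat (∏ i, r i ^ (c * v i)) := by
  have h : (∏ i, r i ^ (c * v i)) = (∏ i, r i ^ v i) ^ c := by
    rw [← Finset.prod_zpow]
    exact Finset.prod_congr rfl fun i _ => by rw [← zpow_mul, mul_comm]
  rw [h]; exact isRat_zpow' c hv

lemma Rmem_finsum (hr : ∀ i, r i ≠ 0) {α : Type*} (s : Finset α) (F : α → Fin n → ℤ)
    (h : ∀ x ∈ s, IsRat (∏ i, r i ^ F x i)) :
    IsRat (∏ i, r i ^ (∑ x ∈ s, F x i)) := by
  classical
  induction s using Finset.induction with
  | empty => exact ⟨1, by simp⟩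
  | @insert a s ha ih =>
      have h1 : ∀ i, (∑ x ∈ insert a s, F x i) = F a i + ∑ x ∈ s, F x i := fun i =>
        Finset.sum_insert ha
      simp only [h1]
      exact Rmem_add hr (h a (Finset.mem_insert_self a s))
        (ih fun x hx => h x (Finset.mem_insert_of_mem hx))

lemma prod_reindex (σ : Equiv.Perm (Fin n)) (v : Fin n → ℤ) :
    (∏ i, r (σ i) ^ v i) = ∏ i, r i ^ v (σ⁻¹ i) := by
  rw [← Equiv.prod_comp σ (fun i => r i ^ v (σ⁻¹ i))]
  exact Finset.prod_congr rfl fun i _ => by simp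

lemma GQ_apply {σ : Equiv.Perm (Fin n)} (hσ : σ ∈ GaloisLikeQ r) {v : Fin n → ℤ}
    (hv : IsRat (∏ i, r i ^ v i)) : IsRat (∏ i, r i ^ v (σ⁻¹ i)) := by
  have h := hσ v hv
  rwa [prod_reindex] at h

lemma GQ_one : (1 : Equiv.Perm (Fin n)) ∈ GaloisLikeQ r := fun v hv => by simpa using hv

lemma GQ_mul {σ τ : Equiv.Perm (Fin n)} (hσ : σ ∈ GaloisLikeQ r) (hτ : τ ∈ GaloisLikeQ r) :
    σ * τ ∈ GaloisLikeQ r := by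
  intro v hv
  rw [prod_reindex]
  have h2 := GQ_apply hσ (GQ_apply hτ hv)
  simpa [mul_inv_rev] using h2

lemma GQ_pow {σ : Equiv.Perm (Fin n)} (hσ : σ ∈ GaloisLikeQ r) (k : ℕ) :
    σ ^ k ∈ GaloisLikeQ r := by
  induction k with
  | zero => simpa using (GQ_one (r := r))
  | succ k ih => rw [pow_succ]; exact GQ_mul ih hσ

lemma GQ_inv {σ : Equiv.Perm (Fin n)} (hσ : σ ∈ GaloisLikeQ r) : σ⁻¹ ∈ GaloisLikeQ r := by
  have hpos : 0 < orderOf σ := orderOf_pos σ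
  have h : σ⁻¹ = σ ^ (orderOf σ - 1) := by
    apply inv_eq_of_mul_eq_one_right
    rw [← pow_succ', Nat.sub_add_cancel hpos, pow_orderOf_eq_one]
  rw [h]; exact GQ_pow hσ _

end Helpers
lemma key_lemma {n : ℕ} {r : Fin n → ℂ} (hr : ∀ i, r i ≠ 0)
    (hone : IsRat (∏ i, r i))
    (h2t : SetDoublyTransitive (GaloisLikeQ r))
    (v : Fin n → ℤ) (hv : IsRat (∏ i, r i ^ v i)) (hsum : ∑ i, v i = 0)
    (a : Fin n) (hva : v a ≠ 0) : IsRootOfRational (r a) := by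
  classical
  -- there is another index
  obtain ⟨b, hb⟩ : ∃ b : Fin n, b ≠ a := by
    by_contra h
    push_neg at h
    have huniv : (Finset.univ : Finset (Fin n)) = {a} :=
      Finset.eq_singleton_iff_unique_mem.mpr ⟨Finset.mem_univ a, fun x _ => h x⟩
    rw [huniv, Finset.sum_singleton] at hsum
    exact hva hsum
  -- the stabilizer of a inside G_f^Q
  set S : Finset (Equiv.Perm (Fin n)) :=
    Finset.univ.filter (fun σ => σ ∈ GaloisLikeQ r ∧ σ a = a) with hS
  have hmemS : ∀ σ, σ ∈ S ↔ σ ∈ GaloisLikeQ r ∧ σ a = a := by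
    intro σ; simp [hS]
  have h1S : (1 : Equiv.Perm (Fin n)) ∈ S := (hmemS 1).2 ⟨GQ_one, rfl⟩
  have hScard : 1 ≤ (S.card : ℤ) := by
    have : 0 < S.card := Finset.card_pos.2 ⟨1, h1S⟩
    exact_mod_cast this
  have hinva : ∀ σ ∈ S, σ⁻¹ a = a := by
    intro σ hσ
    have h1 := ((hmemS σ).1 hσ).2
    nth_rewrite 1 [← h1]
    exact Equiv.symm_apply_apply σ a
  -- the averaged vector
  set u : Fin n → ℤ := fun m => ∑ σ ∈ S, v (σ⁻¹ m) with hu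
  have hu_mem : IsRat (∏ i, r i ^ u i) := by
    simp only [hu]
    exact Rmem_finsum hr S (fun σ m => v (σ⁻¹ m)) fun σ hσ =>
      GQ_apply ((hmemS σ).1 hσ).1 hv
  have hua : u a = (S.card : ℤ) * v a := by
    simp only [hu]
    rw [Finset.sum_congr rfl fun σ hσ => by rw [hinva σ hσ]]
    simp [mul_comm]
  -- u is constant away from a
  have hconst : ∀ m : Fin n, m ≠ a → u m = u b := by
    intro m hm
    obtain ⟨ρ, hρG, hρa, hρb⟩ := h2t a b a m (Ne.symm hb) (Ne.symm hm)
    simp only [hu]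
    refine Finset.sum_nbij' (fun σ => ρ⁻¹ * σ) (fun σ => ρ * σ) ?_ ?_ ?_ ?_ ?_
    · intro σ hσ
      obtain ⟨hσG, hσa⟩ := (hmemS σ).1 hσ
      refine (hmemS _).2 ⟨GQ_mul (GQ_inv hρG) hσG, ?_⟩
      have hρS : ρ ∈ S := (hmemS ρ).2 ⟨hρG, hρa⟩
      simp only [Equiv.Perm.mul_apply, hσa]
      exact hinva ρ hρS
    · intro σ hσ
      obtain ⟨hσG, hσa⟩ := (hmemS σ).1 hσ
      refine (hmemS _).2 ⟨GQ_mul hρG hσG, ?_⟩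
      simp [Equiv.Perm.mul_apply, hσa, hρa]
    · intro σ _; simp [mul_assoc]
    · intro σ _; simp [mul_assoc]
    · intro σ _
      congr 1
      simp only [mul_inv_rev, inv_inv, Equiv.Perm.mul_apply, hρb]
  -- total sum is zero
  have htot : ∑ m, u m = 0 := by
    simp only [hu]
    rw [Finset.sum_comm]
    refine Finset.sum_eq_zero fun σ _ => ?_
    rw [Equiv.sum_comp σ⁻¹ v]
    exact hsum
  -- cardinality bookkeeping
  set p : ℤ := ((Finset.univ.erase a : Finset (Fin n)).card : ℤ) with hp
  have hpb : 1 ≤ p := by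
    have : 0 < (Finset.univ.erase a : Finset (Fin n)).card :=
      Finset.card_pos.2 ⟨b, Finset.mem_erase.2 ⟨hb, Finset.mem_univ b⟩⟩
    rw [hp]; exact_mod_cast this
  have hsplit : ∑ m, u m = p * u b + u a := by
    rw [← Finset.sum_erase_add Finset.univ u (Finset.mem_univ a)]
    congr 1
    rw [Finset.sum_congr rfl fun m hm => hconst m (Finset.mem_erase.1 hm).1]
    simp [hp, mul_comm]
  have heq : (S.card : ℤ) * v a + p * u b = 0 := by
    rw [← hua]; linarith [htot, hsplit]
  -- the single-coordinate relation
  set e : ℤ := u a - u b with he_def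
  have hmem_e : IsRat (r a ^ e) := by
    have h1 : IsRat (∏ i, r i ^ (u i - u b)) :=
      Rmem_sub hr hu_mem (Rmem_const hone (u b))
    rwa [Finset.prod_eq_single a
      (fun m _ hm => by rw [hconst m hm, sub_self, zpow_zero])
      (fun h => absurd (Finset.mem_univ a) h)] at h1
  have he : e ≠ 0 := by
    intro h0
    have hub : u b = u a := by omega
    rw [hub, hua] at heq
    have h2 : (S.card : ℤ) * v a * (1 + p) = 0 := by linear_combination heq
    rcases mul_eq_zero.1 h2 with h3 | h3
    · rcases mul_eq_zero.1 h3 with h4 | h4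
      · omega
      · exact hva h4
    · omega
  -- conclude
  obtain ⟨q, hq⟩ := hmem_e
  refine ⟨e.natAbs, Int.natAbs_pos.2 he, ?_⟩
  rcases Int.natAbs_eq e with h | h
  · exact ⟨q, by rw [← zpow_natCast, ← h, hq]⟩
  · refine ⟨q⁻¹, ?_⟩
    have h1 : r a ^ (e.natAbs : ℤ) = (r a ^ e)⁻¹ := by
      conv_rhs => rw [h]
      rw [zpow_neg, inv_inv]
    rw [← zpow_natCast, h1, hq]
    push_cast
    ring
lemma prod_roots_isRat {f : Polynomial ℚ} (hf0 : f.eval 0 ≠ 0) {n : ℕ} (hn : n = f.natDegree)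
    {r : Fin n → ℂ} (hinj : Function.Injective r)
    (hroot : ∀ i, Polynomial.aeval (r i) f = 0) : IsRat (∏ i, r i) := by
  classical
  have hfne : f ≠ 0 := fun h => hf0 (by simp [h])
  set F := f.map (algebraMap ℚ ℂ) with hFdef
  have hFne : F ≠ 0 := by
    simpa [hFdef, Polynomial.map_eq_zero] using hfne
  have hdegF : F.natDegree = n := by
    rw [hFdef, Polynomial.natDegree_map, hn]
  have hroots : ∀ i, r i ∈ F.roots := fun i =>
    Polynomial.mem_roots'.2 ⟨hFne, by
      have h := hroot i
      rwa [Polynomial.aeval_def, ← Polynomial.eval_map] at h⟩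
  set T : Finset ℂ := Finset.univ.image r with hT
  have hcardT : T.card = n := by
    rw [hT, Finset.card_image_of_injective _ hinj, Finset.card_univ, Fintype.card_fin]
  have hle : T.val ≤ F.roots := by
    rw [Multiset.le_iff_count]
    intro x
    by_cases hx : x ∈ T
    · have h1 : Multiset.count x T.val = 1 := by
        rw [Multiset.count_eq_one_of_mem T.nodup hx]
      rw [h1]
      rw [Multiset.one_le_count_iff_mem]
      obtain ⟨i, _, rfl⟩ := Finset.mem_image.1 hx
      exact hroots i
    · have h1 : Multiset.count x T.val = 0 := by
        rwa [Multiset.count_eq_zero_of_notMem]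
      simp [h1]
  have hcardroots : Multiset.card F.roots ≤ Multiset.card T.val := by
    have h1 : Multiset.card T.val = n := hcardT
    calc Multiset.card F.roots ≤ F.natDegree := Polynomial.card_roots' F
    _ = n := hdegF
    _ = Multiset.card T.val := h1.symm
  have hTr : T.val = F.roots := Multiset.eq_of_le_of_card_le hle hcardroots
  have hprodT : T.val.prod = ∏ i, r i := by
    have h1 : T.val.prod = ∏ x ∈ T, x := by
      rw [Finset.prod_eq_multiset_prod, Multiset.map_id']
    rw [h1, hT, Finset.prod_image (fun x _ y _ h => hinj h)]
  have hsplit : F = Polynomial.C F.leadingCoeff *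
      (F.roots.map fun a => Polynomial.X - Polynomial.C a).prod :=
    (IsAlgClosed.splits F).eq_prod_roots
  have heval := congrArg (Polynomial.eval 0) hsplit
  rw [Polynomial.eval_mul, Polynomial.eval_C, Polynomial.eval_multiset_prod,
    Multiset.map_map] at heval
  have hmapeq : F.roots.map ((Polynomial.eval 0) ∘ fun a => Polynomial.X - Polynomial.C a)
      = F.roots.map Neg.neg := by
    refine Multiset.map_congr rfl fun a _ => ?_
    simp
  rw [hmapeq, Multiset.prod_map_neg] at heval
  have hcards : Multiset.card F.roots = n := by rw [← hTr]; exact hcardT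
  rw [hcards, ← hTr, hprodT] at heval
  have hev0 : F.eval 0 = ((f.eval 0 : ℚ) : ℂ) := by
    rw [hFdef, Polynomial.eval_map, Polynomial.eval₂_at_zero, Polynomial.coeff_zero_eq_eval_zero]
    simp
  have hlc : F.leadingCoeff = ((f.leadingCoeff : ℚ) : ℂ) := by
    rw [hFdef, Polynomial.leadingCoeff_map]
    simp
  rw [hev0, hlc] at heval
  have hlcne : (f.leadingCoeff : ℂ) ≠ 0 := by
    simp [Polynomial.leadingCoeff_ne_zero.2 hfne]
  refine ⟨(-1 : ℚ) ^ n * f.eval 0 / f.leadingCoeff, ?_⟩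
  push_cast
  rw [eq_div_iff hlcne]
  rw [heval]
  have hsq : ((-1 : ℂ)) ^ n * ((-1 : ℂ)) ^ n = 1 := by rw [← mul_pow]; norm_num
  linear_combination (-((f.leadingCoeff : ℂ) * ∏ i, r i)) * hsq
/-- Order the roots of `f` as `α₁,…,α_s,γ₁,…,γ_t` (`n = s + t`) where
`α₁,…,α_s` are exactly the roots that are not roots of rational. If `G_f^B` or `G_f^ℚ`
is doubly transitive on the roots, then every `v ∈ R_f^ℚ` satisfies
`v(1) = ⋯ = v(s) = (v(1)+⋯+v(n))/n`. -/
theorem statement11 (f : Polynomial ℚ) (hf0 : f.eval 0 ≠ 0) (n : ℕ) (hn : n = f.natDegree)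
    (r : Fin n → ℂ) (hinj : Function.Injective r)
    (hroot : ∀ i, Polynomial.aeval (r i) f = 0)
    (hall : ∀ z : ℂ, Polynomial.aeval z f = 0 → ∃ i, r i = z)
    (s t : ℕ) (hst : n = s + t)
    (horder : ∀ i : Fin n, (i : ℕ) < s ↔ ¬ IsRootOfRational (r i))
    (h2t : SetDoublyTransitive (GaloisLikeB r) ∨ SetDoublyTransitive (GaloisLikeQ r)) :
    ∀ v : Fin n → ℤ, IsRat (∏ i, r i ^ v i) →
      (∀ i j : Fin n, (i : ℕ) < s → (j : ℕ) < s → v i = v j) ∧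
      (∀ i : Fin n, (i : ℕ) < s → (n : ℤ) * v i = ∑ j, v j) := by
  classical
  -- the roots are nonzero
  have hr : ∀ i, r i ≠ 0 := by
    intro i h
    apply hf0
    have h1 := hroot i
    rw [h] at h1
    have h2 : (algebraMap ℚ ℂ) (f.eval 0) = 0 := by
      rw [← h1, Polynomial.aeval_def, Polynomial.eval₂_at_zero,
        Polynomial.coeff_zero_eq_eval_zero]
    exact (map_eq_zero_iff _ (algebraMap ℚ ℂ).injective).1 h2
  have hone : IsRat (∏ i, r i) := prod_roots_isRat hf0 hn hinj hroot
  -- G_f^ℚ is doubly transitive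
  have hQ : SetDoublyTransitive (GaloisLikeQ r) := by
    rcases h2t with hB | hQ
    · intro i j k l hij hkl
      obtain ⟨σ, hσ, h1, h2⟩ := hB i j k l hij hkl
      exact ⟨σ, fun v hv => by rw [hσ v hv]; exact hv, h1, h2⟩
    · exact hQ
  intro v hv
  -- the normalized vector
  have hw : IsRat (∏ i, r i ^ ((n : ℤ) * v i - ∑ j, v j)) :=
    Rmem_sub hr (Rmem_mulconst (n : ℤ) hv) (Rmem_const hone (∑ j, v j))
  have hwsum : ∑ i, ((n : ℤ) * v i - ∑ j, v j) = 0 := by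
    rw [Finset.sum_sub_distrib, ← Finset.mul_sum, Finset.sum_const, Finset.card_univ,
      Fintype.card_fin, nsmul_eq_mul]
    ring
  have hzero : ∀ i : Fin n, (i : ℕ) < s → (n : ℤ) * v i - ∑ j, v j = 0 := by
    intro i his
    by_contra hne
    exact ((horder i).1 his) (key_lemma hr hone hQ _ hw hwsum i hne)
  constructor
  · intro i j hi hj
    have h1 := hzero i hi
    have h2 := hzero j hj
    have hn0 : (n : ℤ) ≠ 0 := by
      have := i.pos
      omega
    have h3 : (n : ℤ) * v i = (n : ℤ) * v j := by omega
    exact mul_left_cancel₀ hn0 h3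
  · intro i hi
    have h1 := hzero i hi
    omega
end
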